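/- arXiv:2303.16700 — 2 statements merged into one kernel-verified Lean document; each statement's English description precedes it below -/
import Mathlib

section
/- Let P and Q be finite point sets in general position in ℝ² and γ: P → Q a bijection preserving orientations of all ordered triples. Then for any four points a,b,c,d ∈ P, the segments ab and cd are disjoint if and only if the segments γ(a)γ(b) and γ(c)γ(d) are disjoint. -/
noncomputable section

/-- Points of the plane. -/
abbrev Pl := ℝ × ℝ

/-- `P` is in general position: no three (distinct) points of `P` are collinear. -/
def GenPos (P : Set Pl) : Prop :=
  ∀ a ∈ P, ∀ b ∈ P, ∀ c ∈ P, a ≠ b → a ≠ c → b ≠ c →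
    ¬ Collinear ℝ ({a, b, c} : Set Pl)

/-- The set of all closed straight-line segments with (distinct) endpoints in `P`. -/
def Segs (P : Set Pl) : Set (Set Pl) :=
  {s | ∃ a ∈ P, ∃ b ∈ P, a ≠ b ∧ s = segment ℝ a b}

/-- The edge disjointness graph of `P`: vertices are the segments of `P`,
two of them adjacent iff they are disjoint. -/
def DisjGraph (P : Set Pl) : SimpleGraph ↥(Segs P) where
  Adj s t := Disjoint (s : Set Pl) (t : Set Pl)
  symm := ⟨fun _ _ h => Disjoint.symm h⟩
  loopless := ⟨by
    rintro ⟨s, a, ha, b, hb, hab, rfl⟩ h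
    exact (Set.not_disjoint_iff.2
      ⟨a, left_mem_segment ℝ a b, left_mem_segment ℝ a b⟩) h⟩

/-- An independent set of vertices: pairwise non-adjacent. -/
def IsIndepSet {V : Type*} (G : SimpleGraph V) (s : Set V) : Prop :=
  s.Pairwise fun a b => ¬ G.Adj a b

/-- Twice the signed area of the triangle `a b c`; its sign is the orientation. -/
def det3 (a b c : Pl) : ℝ :=
  (b.1 - a.1) * (c.2 - a.2) - (b.2 - a.2) * (c.1 - a.1)

/-- `p 0, …, p (n-1)` are in convex position, appearing in this
(counterclockwise) cyclic order on their convex hull. -/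
def ConvexCyclic {n : ℕ} (p : Fin n → Pl) : Prop :=
  ∀ i j k : Fin n, i < j → j < k → 0 < det3 (p i) (p j) (p k)

/-- `P` is in convex position: every point of `P` is a vertex of the convex hull. -/
def ConvexPos (P : Set Pl) : Prop :=
  ∀ x ∈ P, x ∉ convexHull ℝ (P \ {x})

/-- `P` and `Q` have the same order type. -/
def SameOrderType (P Q : Set Pl) : Prop :=
  ∃ γ : Pl → Pl, Set.BijOn γ P Q ∧
    ∀ a ∈ P, ∀ b ∈ P, ∀ c ∈ P,
      Real.sign (det3 a b c) = Real.sign (det3 (γ a) (γ b) (γ c))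

/-- A thrackle of `P`: a set of segments of `P`, any two of which intersect. -/
def IsThrackle (P : Set Pl) (T : Set (Set Pl)) : Prop :=
  T ⊆ Segs P ∧ ∀ s ∈ T, ∀ t ∈ T, s ≠ t → ¬ Disjoint s t

end

noncomputable section

lemma stmt8_det3_affine (a b c d : ℝ × ℝ) (u v : ℝ) (huv : u + v = 1) :
    det3 a b (u • c + v • d) = u * det3 a b c + v * det3 a b d := by
  have hu : u = 1 - v := by linarith
  subst hu
  simp only [det3, Prod.fst_add, Prod.snd_add, Prod.smul_fst, Prod.smul_snd, smul_eq_mul]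
  ring

lemma stmt8_det3_self1 (a b : ℝ × ℝ) : det3 a b a = 0 := by simp only [det3]; ring
lemma stmt8_det3_self2 (a b : ℝ × ℝ) : det3 a b b = 0 := by simp only [det3]; ring

lemma stmt8_exists_param {c d x : ℝ × ℝ} (hcd : c ≠ d) (h : det3 c d x = 0) :
    ∃ u : ℝ, x = (1 - u) • c + u • d := by
  simp only [det3] at h
  by_cases h1 : d.1 = c.1
  · have h2 : d.2 ≠ c.2 := by
      intro h2; exact hcd (Prod.ext h1.symm h2.symm)
    rw [h1] at h
    have hx1 : x.1 = c.1 := by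
      have : (d.2 - c.2) * (x.1 - c.1) = 0 := by linarith
      rcases mul_eq_zero.1 this with h'|h'
      · exact absurd (by linarith) h2
      · linarith
    refine ⟨(x.2 - c.2) / (d.2 - c.2), ?_⟩
    have hk : d.2 - c.2 ≠ 0 := sub_ne_zero.2 h2
    apply Prod.ext <;> simp [Prod.fst_add, Prod.snd_add, Prod.smul_fst, Prod.smul_snd, smul_eq_mul]
    · rw [h1, hx1]; ring
    · field_simp; ring
  · have hk : d.1 - c.1 ≠ 0 := sub_ne_zero.2 h1
    refine ⟨(x.1 - c.1) / (d.1 - c.1), ?_⟩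
    apply Prod.ext <;> simp [Prod.fst_add, Prod.snd_add, Prod.smul_fst, Prod.smul_snd, smul_eq_mul]
    · field_simp; ring
    · field_simp
      nlinarith [h]

lemma stmt8_det3_ne_of_eq_fst {a b c : ℝ × ℝ} (h : a = b) : det3 a b c = 0 := by
  subst h; simp only [det3]; ring

lemma stmt8_opp_sign {u v D E : ℝ} (hu : 0 ≤ u) (hv : 0 ≤ v) (huv : u + v = 1)
    (hD : D ≠ 0) (hE : E ≠ 0) (h : u * D + v * E = 0) : D * E < 0 := by
  rcases hD.lt_or_gt with hD'|hD' <;> rcases hE.lt_or_gt with hE'|hE'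
  · exfalso
    have huD : u * D ≤ 0 := mul_nonpos_iff.2 (Or.inl ⟨hu, hD'.le⟩)
    have hvE : v * E ≤ 0 := mul_nonpos_iff.2 (Or.inl ⟨hv, hE'.le⟩)
    have huD0 : u * D = 0 := by linarith
    have hvE0 : v * E = 0 := by linarith
    have hu0 : u = 0 := by rcases mul_eq_zero.1 huD0 with h'|h'; exact h'; exact absurd h' hD
    have hv0 : v = 0 := by rcases mul_eq_zero.1 hvE0 with h'|h'; exact h'; exact absurd h' hE
    linarith
  · nlinarith
  · nlinarith
  · exfalso
    have huD : 0 ≤ u * D := mul_nonneg hu hD'.le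
    have hvE : 0 ≤ v * E := mul_nonneg hv hE'.le
    have huD0 : u * D = 0 := by linarith
    have hvE0 : v * E = 0 := by linarith
    have hu0 : u = 0 := by rcases mul_eq_zero.1 huD0 with h'|h'; exact h'; exact absurd h' hD
    have hv0 : v = 0 := by rcases mul_eq_zero.1 hvE0 with h'|h'; exact h'; exact absurd h' hE
    linarith

lemma stmt8_cross_iff {a b c d : ℝ × ℝ}
    (h1 : det3 a b c ≠ 0) (h2 : det3 a b d ≠ 0)
    (h3 : det3 c d a ≠ 0) (h4 : det3 c d b ≠ 0) :
    ¬ Disjoint (segment ℝ a b) (segment ℝ c d) ↔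
      det3 a b c * det3 a b d < 0 ∧ det3 c d a * det3 c d b < 0 := by
  have hab : a ≠ b := fun h => h1 (by rw [stmt8_det3_ne_of_eq_fst h])
  have hcd : c ≠ d := fun h => h3 (by rw [stmt8_det3_ne_of_eq_fst h])
  rw [Set.not_disjoint_iff]
  constructor
  · rintro ⟨x, hx1, hx2⟩
    obtain ⟨u, v, hu, hv, huv, hx⟩ := hx1
    obtain ⟨p, q, hp, hq, hpq, hx'⟩ := hx2
    have e1 : det3 c d x = 0 := by
      rw [← hx', stmt8_det3_affine c d c d p q hpq, stmt8_det3_self1, stmt8_det3_self2]; ring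
    have e2 : det3 a b x = 0 := by
      rw [← hx, stmt8_det3_affine a b a b u v huv, stmt8_det3_self1, stmt8_det3_self2]; ring
    constructor
    · rw [← hx'] at e2
      rw [stmt8_det3_affine a b c d p q hpq] at e2
      exact stmt8_opp_sign hp hq hpq h1 h2 e2
    · rw [← hx] at e1
      rw [stmt8_det3_affine c d a b u v huv] at e1
      exact stmt8_opp_sign hu hv huv h3 h4 e1
  · rintro ⟨hP1, hP2⟩
    set D1 := det3 a b c; set D2 := det3 a b d
    set D3 := det3 c d a; set D4 := det3 c d b
    have hden : D3 - D4 ≠ 0 := by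
      intro h; rw [sub_eq_zero] at h; rw [h] at hP2; nlinarith
    set s : ℝ := D3 / (D3 - D4) with hs
    have hs01 : 0 < s := by
      rw [hs, div_pos_iff]
      rcases h3.lt_or_gt with h'|h' <;> rcases h4.lt_or_gt with h''|h''
      · exfalso; nlinarith
      · right; constructor <;> linarith
      · left; constructor <;> linarith
      · exfalso; nlinarith
    have hs02 : s < 1 := by
      rw [hs, div_lt_one_iff]
      rcases h3.lt_or_gt with h'|h' <;> rcases h4.lt_or_gt with h''|h''
      · exfalso; nlinarith
      · right; right; constructor <;> linarith
      · left; constructor <;> linarith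
      · exfalso; nlinarith
    have hs0 : 0 < s ∧ s < 1 := ⟨hs01, hs02⟩
    set x : ℝ × ℝ := (1 - s) • a + s • b with hxdef
    have hdx : det3 c d x = 0 := by
      rw [hxdef, stmt8_det3_affine c d a b (1 - s) s (by ring)]
      have hsd : s * (D3 - D4) = D3 := by rw [hs]; exact div_mul_cancel₀ D3 hden
      have h' : (1 - s) * D3 + s * D4 = 0 := by linear_combination -hsd
      exact h'
    obtain ⟨w, hw⟩ := stmt8_exists_param hcd hdx
    have hdax : det3 a b x = 0 := by
      rw [hxdef, stmt8_det3_affine a b a b (1 - s) s (by ring), stmt8_det3_self1, stmt8_det3_self2]; ring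
    have hwc : (1 - w) * D1 + w * D2 = 0 := by
      rw [← stmt8_det3_affine a b c d (1 - w) w (by ring), ← hw, hdax]
    have hsgn := mul_neg_iff.1 hP1
    have hw0 : 0 ≤ w := by
      by_contra h
      push_neg at h
      rcases hsgn with ⟨hd1, hd2⟩ | ⟨hd1, hd2⟩
      · nlinarith [mul_pos (show (0:ℝ) < 1 - w by linarith) hd1,
          mul_pos_of_neg_of_neg h hd2]
      · nlinarith [mul_pos (show (0:ℝ) < 1 - w by linarith) (neg_pos.2 hd1),
          mul_pos (neg_pos.2 h) hd2]
    have hw1 : w ≤ 1 := by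
      by_contra h
      push_neg at h
      rcases hsgn with ⟨hd1, hd2⟩ | ⟨hd1, hd2⟩
      · nlinarith [mul_pos (show (0:ℝ) < w - 1 by linarith) hd1,
          mul_pos (show (0:ℝ) < w by linarith) (neg_pos.2 hd2)]
      · nlinarith [mul_pos (show (0:ℝ) < w - 1 by linarith) (neg_pos.2 hd1),
          mul_pos (show (0:ℝ) < w by linarith) hd2]
    refine ⟨x, ⟨1 - s, s, by linarith [hs0.2], le_of_lt hs0.1, by ring, rfl⟩,
      ⟨1 - w, w, by linarith, hw0, by ring, hw.symm⟩⟩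

lemma stmt8_sign_pos_transfer {x y : ℝ} (h : Real.sign x = Real.sign y) (hx : 0 < x) : 0 < y := by
  rcases lt_trichotomy y 0 with h'|h'|h'
  · rw [Real.sign_of_pos hx, Real.sign_of_neg h'] at h; norm_num at h
  · rw [Real.sign_of_pos hx, h', Real.sign_zero] at h; norm_num at h
  · exact h'

lemma stmt8_sign_neg_transfer {x y : ℝ} (h : Real.sign x = Real.sign y) (hx : x < 0) : y < 0 := by
  rcases lt_trichotomy y 0 with h'|h'|h'
  · exact h'
  · rw [Real.sign_of_neg hx, h', Real.sign_zero] at h; norm_num at h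
  · rw [Real.sign_of_neg hx, Real.sign_of_pos h'] at h; norm_num at h

lemma stmt8_mul_neg_transfer {x y x' y' : ℝ} (hx : x ≠ 0) (hy : y ≠ 0)
    (hsx : Real.sign x = Real.sign x') (hsy : Real.sign y = Real.sign y') :
    (x * y < 0 ↔ x' * y' < 0) := by
  have hx' : x' ≠ 0 := by
    intro h; rw [h, Real.sign_zero, Real.sign_eq_zero_iff] at hsx; exact hx hsx
  have hy' : y' ≠ 0 := by
    intro h; rw [h, Real.sign_zero, Real.sign_eq_zero_iff] at hsy; exact hy hsy
  have A : 0 < x ↔ 0 < x' := ⟨stmt8_sign_pos_transfer hsx, stmt8_sign_pos_transfer hsx.symm⟩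
  have B : x < 0 ↔ x' < 0 := ⟨stmt8_sign_neg_transfer hsx, stmt8_sign_neg_transfer hsx.symm⟩
  have C : 0 < y ↔ 0 < y' := ⟨stmt8_sign_pos_transfer hsy, stmt8_sign_pos_transfer hsy.symm⟩
  have D : y < 0 ↔ y' < 0 := ⟨stmt8_sign_neg_transfer hsy, stmt8_sign_neg_transfer hsy.symm⟩
  rw [mul_neg_iff, mul_neg_iff]
  tauto

lemma stmt8_det3_ne_zero_of_not_collinear {a b c : ℝ × ℝ} (h : ¬ Collinear ℝ ({a, b, c} : Set (ℝ × ℝ))) :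
    det3 a b c ≠ 0 := by
  intro hdet
  apply h
  by_cases hab : a = b
  · subst hab
    simp only [Set.insert_comm, Set.pair_eq_singleton, Set.insert_eq]
    exact (collinear_pair ℝ a c).subset (by intro x hx; simp at hx; rcases hx with h|h|h <;> simp [h])
  · obtain ⟨u, hu⟩ := stmt8_exists_param hab hdet
    have hmem : c ∈ line[ℝ, a, b] := by
      rw [hu]
      have : (1 - u) • a + u • b = AffineMap.lineMap a b u := by
        rw [AffineMap.lineMap_apply_module]
      rw [this]
      exact AffineMap.lineMap_mem_affineSpan_pair u a b
    have hcol : Collinear ℝ ({c, a, b} : Set (ℝ × ℝ)) :=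
      collinear_insert_of_mem_affineSpan_pair hmem
    have : ({a, b, c} : Set (ℝ × ℝ)) = {c, a, b} := by
      ext x; simp; tauto
    rw [this]
    exact hcol

end

/-- an orientation-preserving bijection preserves disjointness
of segments. -/
theorem stmt_8 (P Q : Set Pl) (hPfin : P.Finite) (hQfin : Q.Finite)
    (hgP : GenPos P) (hgQ : GenPos Q) (γ : Pl → Pl)
    (hbij : Set.BijOn γ P Q)
    (hpres : ∀ a ∈ P, ∀ b ∈ P, ∀ c ∈ P,
      Real.sign (det3 a b c) = Real.sign (det3 (γ a) (γ b) (γ c)))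
    (a b c d : Pl) (ha : a ∈ P) (hb : b ∈ P) (hc : c ∈ P) (hd : d ∈ P)
    (hab : a ≠ b) (hcd : c ≠ d) :
    Disjoint (segment ℝ a b) (segment ℝ c d) ↔
      Disjoint (segment ℝ (γ a) (γ b)) (segment ℝ (γ c) (γ d)) := by
  by_cases hac : a = c
  · subst hac
    exact iff_of_false
      (fun h => Set.not_disjoint_iff.2
        ⟨a, left_mem_segment ℝ a b, left_mem_segment ℝ a d⟩ h)
      (fun h => Set.not_disjoint_iff.2
        ⟨γ a, left_mem_segment ℝ (γ a) (γ b), left_mem_segment ℝ (γ a) (γ d)⟩ h)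
  by_cases had : a = d
  · subst had
    exact iff_of_false
      (fun h => Set.not_disjoint_iff.2
        ⟨a, left_mem_segment ℝ a b, right_mem_segment ℝ c a⟩ h)
      (fun h => Set.not_disjoint_iff.2
        ⟨γ a, left_mem_segment ℝ (γ a) (γ b), right_mem_segment ℝ (γ c) (γ a)⟩ h)
  by_cases hbc : b = c
  · subst hbc
    exact iff_of_false
      (fun h => Set.not_disjoint_iff.2
        ⟨b, right_mem_segment ℝ a b, left_mem_segment ℝ b d⟩ h)
      (fun h => Set.not_disjoint_iff.2
        ⟨γ b, right_mem_segment ℝ (γ a) (γ b), left_mem_segment ℝ (γ b) (γ d)⟩ h)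
  by_cases hbd : b = d
  · subst hbd
    exact iff_of_false
      (fun h => Set.not_disjoint_iff.2
        ⟨b, right_mem_segment ℝ a b, right_mem_segment ℝ c b⟩ h)
      (fun h => Set.not_disjoint_iff.2
        ⟨γ b, right_mem_segment ℝ (γ a) (γ b), right_mem_segment ℝ (γ c) (γ b)⟩ h)
  have nd1 : det3 a b c ≠ 0 :=
    stmt8_det3_ne_zero_of_not_collinear (hgP a ha b hb c hc hab hac hbc)
  have nd2 : det3 a b d ≠ 0 :=
    stmt8_det3_ne_zero_of_not_collinear (hgP a ha b hb d hd hab had hbd)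
  have nd3 : det3 c d a ≠ 0 :=
    stmt8_det3_ne_zero_of_not_collinear
      (hgP c hc d hd a ha hcd (Ne.symm hac) (Ne.symm had))
  have nd4 : det3 c d b ≠ 0 :=
    stmt8_det3_ne_zero_of_not_collinear
      (hgP c hc d hd b hb hcd (Ne.symm hbc) (Ne.symm hbd))
  have hs1 := hpres a ha b hb c hc
  have hs2 := hpres a ha b hb d hd
  have hs3 := hpres c hc d hd a ha
  have hs4 := hpres c hc d hd b hb
  have nd1' : det3 (γ a) (γ b) (γ c) ≠ 0 := by
    intro h; rw [h, Real.sign_zero] at hs1; exact nd1 (Real.sign_eq_zero_iff.1 hs1)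
  have nd2' : det3 (γ a) (γ b) (γ d) ≠ 0 := by
    intro h; rw [h, Real.sign_zero] at hs2; exact nd2 (Real.sign_eq_zero_iff.1 hs2)
  have nd3' : det3 (γ c) (γ d) (γ a) ≠ 0 := by
    intro h; rw [h, Real.sign_zero] at hs3; exact nd3 (Real.sign_eq_zero_iff.1 hs3)
  have nd4' : det3 (γ c) (γ d) (γ b) ≠ 0 := by
    intro h; rw [h, Real.sign_zero] at hs4; exact nd4 (Real.sign_eq_zero_iff.1 hs4)
  rw [← not_iff_not, stmt8_cross_iff nd1 nd2 nd3 nd4,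
    stmt8_cross_iff nd1' nd2' nd3' nd4']
  exact and_congr (stmt8_mul_neg_transfer nd1 nd2 hs1 hs2)
    (stmt8_mul_neg_transfer nd3 nd4 hs3 hs4)
end

section
/- If P is a set of 6 points in convex position (no three collinear) in the plane, then the disjointness graph D(P) is not Hamiltonian. -/
namespace Stmt10


/-- index pairs `i < j` over `Fin 6` -/
abbrev Pair := {x : Fin 6 × Fin 6 // x.1 < x.2}

def pdisj (a b : Pair) : Prop :=
  a.1.1 ≠ b.1.1 ∧ a.1.1 ≠ b.1.2 ∧ a.1.2 ≠ b.1.1 ∧ a.1.2 ≠ b.1.2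

def pcross (a b : Pair) : Prop :=
  (a.1.1 < b.1.1 ∧ b.1.1 < a.1.2 ∧ a.1.2 < b.1.2) ∨
  (b.1.1 < a.1.1 ∧ a.1.1 < b.1.2 ∧ b.1.2 < a.1.2)

def hadjRel (a b : Pair) : Prop := pdisj a b ∧ ¬ pcross a b

instance : ∀ a b : Pair, Decidable (hadjRel a b) := fun a b => by
  unfold hadjRel pdisj pcross; infer_instance

lemma hadj_symm {a b : Pair} (h : hadjRel a b) : hadjRel b a := by
  obtain ⟨⟨d1, d2, d3, d4⟩, hc⟩ := h
  exact ⟨⟨d1.symm, d3.symm, d2.symm, d4.symm⟩, fun h' => hc (Or.symm h')⟩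

-- the 15 vertices
def h0 : Pair := ⟨(0,1), by decide⟩
def h1 : Pair := ⟨(1,2), by decide⟩
def h2 : Pair := ⟨(2,3), by decide⟩
def h3 : Pair := ⟨(3,4), by decide⟩
def h4 : Pair := ⟨(4,5), by decide⟩
def h5 : Pair := ⟨(0,5), by decide⟩
def m0 : Pair := ⟨(0,2), by decide⟩
def m1 : Pair := ⟨(1,3), by decide⟩
def m2 : Pair := ⟨(2,4), by decide⟩
def m3 : Pair := ⟨(3,5), by decide⟩
def m4 : Pair := ⟨(0,4), by decide⟩
def m5 : Pair := ⟨(1,5), by decide⟩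
def d0 : Pair := ⟨(0,3), by decide⟩
def d1 : Pair := ⟨(1,4), by decide⟩
def d2 : Pair := ⟨(2,5), by decide⟩

section NoHam

variable {u v : Pair → Pair}

/-- `y` is one of the two cycle-neighbours of `x`. -/
def Ed (u v : Pair → Pair) (x y : Pair) : Prop := u x = y ∨ v x = y

lemma uv_ne (huv : ∀ x, u (v x) = x) (hnb : ∀ x, u (u x) ≠ x) (x : Pair) : u x ≠ v x :=
  fun h => hnb x (by rw [h, huv])

lemma ed_u (x : Pair) : Ed u v x (u x) := Or.inl rfl
lemma ed_v (x : Pair) : Ed u v x (v x) := Or.inr rfl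

lemma ed_symm (hvu : ∀ x, v (u x) = x) (huv : ∀ x, u (v x) = x)
    {x y : Pair} (h : Ed u v x y) : Ed u v y x := by
  rcases h with h | h
  · exact Or.inr (by rw [← h, hvu])
  · exact Or.inl (by rw [← h, huv])

lemma ed_adj (huv : ∀ x, u (v x) = x) (hadj : ∀ x, hadjRel x (u x))
    {x y : Pair} (h : Ed u v x y) : hadjRel x y := by
  rcases h with h | h
  · exact h ▸ hadj x
  · have := hadj (v x); rw [huv] at this; rw [← h]; exact hadj_symm this

lemma full (huv : ∀ x, u (v x) = x) (hnb : ∀ x, u (u x) ≠ x)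
    {x a b : Pair} (hxa : Ed u v x a) (hxb : Ed u v x b) (hab : a ≠ b)
    {y : Pair} (hxy : Ed u v x y) : y = a ∨ y = b := by
  have hne := uv_ne huv hnb x
  rcases hxa with h1|h1 <;> rcases hxb with h2|h2 <;> rcases hxy with h3|h3 <;>
    first | (left; grind) | (right; grind) | grind

lemma two_of_ed (huv : ∀ x, u (v x) = x) (hnb : ∀ x, u (u x) ≠ x)
    {x a b : Pair} (h : ∀ y, Ed u v x y → y = a ∨ y = b) (hab : a ≠ b) :
    Ed u v x a ∧ Ed u v x b := by
  have hne := uv_ne huv hnb x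
  have h1 := h _ (ed_u x)
  have h2 := h _ (ed_v x)
  unfold Ed
  rcases h1 with h1|h1 <;> rcases h2 with h2|h2 <;> constructor <;> grind

lemma third (huv : ∀ x, u (v x) = x) (hnb : ∀ x, u (u x) ≠ x)
    {x a b c : Pair} (h : ∀ y, Ed u v x y → y = a ∨ y = b ∨ y = c)
    (hc : Ed u v x c) : Ed u v x a ∨ Ed u v x b := by
  have hne := uv_ne huv hnb x
  have h1 := h _ (ed_u x)
  have h2 := h _ (ed_v x)
  unfold Ed at *
  rcases hc with h3|h3 <;> rcases h1 with h1|h1|h1 <;> rcases h2 with h2|h2|h2 <;>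
    first | (left; left; grind) | (left; right; grind) | (right; left; grind) | (right; right; grind) | grind

lemma not_ed (hvu : ∀ x, v (u x) = x) (huv : ∀ x, u (v x) = x) (hnb : ∀ x, u (u x) ≠ x)
    {x a b c : Pair} (hxa : Ed u v x a) (hxb : Ed u v x b) (hab : a ≠ b)
    (hca : c ≠ a) (hcb : c ≠ b) : ¬ Ed u v c x := by
  intro h
  rcases full huv hnb hxa hxb hab (ed_symm hvu huv h) with h'|h' <;> grind

lemma only_one (huv : ∀ x, u (v x) = x) (hnb : ∀ x, u (u x) ≠ x)
    {x c : Pair} (h : ∀ y, Ed u v x y → y = c) : False := by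
  have hne := uv_ne huv hnb x
  have h1 := h _ (ed_u x)
  have h2 := h _ (ed_v x)
  grind

lemma closure (horb : ∀ x y : Pair, ∃ n, u^[n] x = y)
    (S : Pair → Prop) (hcl : ∀ x, S x → S (u x)) (x0 y0 : Pair) (h0 : S x0) (hy : ¬ S y0) :
    False := by
  obtain ⟨n, hn⟩ := horb x0 y0
  have : ∀ m : ℕ, S (u^[m] x0) := by
    intro m
    induction m with
    | zero => exact h0
    | succ k ih => rw [Function.iterate_succ_apply']; exact hcl _ ih
  exact hy (hn ▸ this n)

set_option maxHeartbeats 2000000 in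
theorem no_ham_cycle (u v : Pair → Pair) (hvu : ∀ x, v (u x) = x) (huv : ∀ x, u (v x) = x)
    (hadj : ∀ x, hadjRel x (u x)) (hnb : ∀ x, u (u x) ≠ x)
    (horb : ∀ x y : Pair, ∃ n, u^[n] x = y) : False := by
  have Efull : ∀ {x a b : Pair}, Ed u v x a → Ed u v x b → a ≠ b →
      ∀ {y : Pair}, Ed u v x y → y = a ∨ y = b :=
    fun hxa hxb hab => full huv hnb hxa hxb hab
  have Etwo : ∀ {x a b : Pair}, (∀ y, Ed u v x y → y = a ∨ y = b) → a ≠ b →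
      Ed u v x a ∧ Ed u v x b := fun h hab => two_of_ed huv hnb h hab
  have Ethird : ∀ {x a b c : Pair}, (∀ y, Ed u v x y → y = a ∨ y = b ∨ y = c) →
      Ed u v x c → Ed u v x a ∨ Ed u v x b := fun h hc => third huv hnb h hc
  have Esymm : ∀ {x y : Pair}, Ed u v x y → Ed u v y x := fun h => ed_symm hvu huv h
  have Enot : ∀ {x a b c : Pair}, Ed u v x a → Ed u v x b → a ≠ b → c ≠ a → c ≠ b →
      ¬ Ed u v c x := fun h1 h2 h3 h4 h5 => not_ed hvu huv hnb h1 h2 h3 h4 h5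
  have Eone : ∀ {x c : Pair}, (∀ y, Ed u v x y → y = c) → False :=
    fun h => only_one huv hnb h
  have Eadj : ∀ {x y : Pair}, Ed u v x y → hadjRel x y := fun h => ed_adj huv hadj h
  -- decide neighborhood facts
  have A_d0 : ∀ y, hadjRel d0 y → y = h1 ∨ y = h4 := by decide
  have A_d1 : ∀ y, hadjRel d1 y → y = h2 ∨ y = h5 := by decide
  have A_d2 : ∀ y, hadjRel d2 y → y = h0 ∨ y = h3 := by decide
  have A_m0 : ∀ y, hadjRel m0 y → y = h3 ∨ y = h4 ∨ y = m3 := by decide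
  have A_m1 : ∀ y, hadjRel m1 y → y = h4 ∨ y = h5 ∨ y = m4 := by decide
  have A_m2 : ∀ y, hadjRel m2 y → y = h5 ∨ y = h0 ∨ y = m5 := by decide
  have A_m3 : ∀ y, hadjRel m3 y → y = h0 ∨ y = h1 ∨ y = m0 := by decide
  have A_m4 : ∀ y, hadjRel m4 y → y = h1 ∨ y = h2 ∨ y = m1 := by decide
  have A_m5 : ∀ y, hadjRel m5 y → y = h2 ∨ y = h3 ∨ y = m2 := by decide
  -- degree-2 vertices have forced edges
  obtain ⟨ed0h1, ed0h4⟩ := Etwo (fun y hy => A_d0 y (Eadj hy)) (by decide)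
  obtain ⟨ed1h2, ed1h5⟩ := Etwo (fun y hy => A_d1 y (Eadj hy)) (by decide)
  obtain ⟨ed2h0, ed2h3⟩ := Etwo (fun y hy => A_d2 y (Eadj hy)) (by decide)
  have F_d0 : ∀ {y}, Ed u v d0 y → y = h1 ∨ y = h4 := fun hy => Efull ed0h1 ed0h4 (by decide) hy
  have F_d1 : ∀ {y}, Ed u v d1 y → y = h2 ∨ y = h5 := fun hy => Efull ed1h2 ed1h5 (by decide) hy
  have F_d2 : ∀ {y}, Ed u v d2 y → y = h0 ∨ y = h3 := fun hy => Efull ed2h0 ed2h3 (by decide) hy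
  -- case analysis on the neighbours of m0
  have hm0 : ∀ y, Ed u v m0 y → y = h3 ∨ y = h4 ∨ y = m3 := fun y hy => A_m0 y (Eadj hy)
  have hcase : (Ed u v m0 h3 ∧ Ed u v m0 h4) ∨ (Ed u v m0 h3 ∧ Ed u v m0 m3) ∨
      (Ed u v m0 h4 ∧ Ed u v m0 m3) := by
    have h1 := hm0 _ (ed_u m0)
    have h2 := hm0 _ (ed_v m0)
    have hne := uv_ne huv hnb m0
    unfold Ed
    rcases h1 with h1|h1|h1 <;> rcases h2 with h2|h2|h2 <;>
      first | (exact absurd (h1.trans h2.symm) hne) | tauto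
  rcases hcase with ⟨e1, e2⟩ | ⟨e1, e2⟩ | ⟨e1, e2⟩
  · -- Branch A : m0 - h3, m0 - h4
    have F_h3 : ∀ {y}, Ed u v h3 y → y = d2 ∨ y = m0 :=
      Efull (Esymm ed2h3) (Esymm e1) (by decide)
    have F_h4 : ∀ {y}, Ed u v h4 y → y = d0 ∨ y = m0 :=
      Efull (Esymm ed0h4) (Esymm e2) (by decide)
    have nm3 : ¬ Ed u v m3 m0 := Enot e1 e2 (by decide) (by decide) (by decide)
    have hm3' : ∀ y, Ed u v m3 y → y = h0 ∨ y = h1 := by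
      intro y hy
      rcases A_m3 y (Eadj hy) with h|h|h
      exacts [Or.inl h, Or.inr h, absurd (h ▸ hy) nm3]
    obtain ⟨e3, e4⟩ := Etwo hm3' (by decide)
    have nm1 : ¬ Ed u v m1 h4 := Enot (Esymm ed0h4) (Esymm e2) (by decide) (by decide) (by decide)
    have hm1' : ∀ y, Ed u v m1 y → y = h5 ∨ y = m4 := by
      intro y hy
      rcases A_m1 y (Eadj hy) with h|h|h
      exacts [absurd (h ▸ hy) nm1, Or.inl h, Or.inr h]
    obtain ⟨e5, e6⟩ := Etwo hm1' (by decide)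
    have nm2a : ¬ Ed u v m2 h5 := Enot (Esymm ed1h5) (Esymm e5) (by decide) (by decide) (by decide)
    have nm2b : ¬ Ed u v m2 h0 := Enot (Esymm ed2h0) (Esymm e3) (by decide) (by decide) (by decide)
    exact Eone (x := m2) (c := m5) (fun y hy => by
      rcases A_m2 y (Eadj hy) with h|h|h
      exacts [absurd (h ▸ hy) nm2a, absurd (h ▸ hy) nm2b, h])
  · -- Branch B : m0 - h3, m0 - m3
    have F_m0 : ∀ {y}, Ed u v m0 y → y = h3 ∨ y = m3 := Efull e1 e2 (by decide)
    have F_h3 : ∀ {y}, Ed u v h3 y → y = d2 ∨ y = m0 :=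
      Efull (Esymm ed2h3) (Esymm e1) (by decide)
    rcases Ethird (fun y hy => A_m3 y (Eadj hy)) (Esymm e2) with e3 | e3
    · -- B1 : m3 - h0
      have F_m3 : ∀ {y}, Ed u v m3 y → y = m0 ∨ y = h0 := Efull (Esymm e2) e3 (by decide)
      have F_h0 : ∀ {y}, Ed u v h0 y → y = d2 ∨ y = m3 :=
        Efull (Esymm ed2h0) (Esymm e3) (by decide)
      refine closure horb (fun x => x = d2 ∨ x = h0 ∨ x = h3 ∨ x = m0 ∨ x = m3) ?_ d2 h1
        (Or.inl rfl) ?_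
      · intro x hx
        rcases hx with rfl|rfl|rfl|rfl|rfl
        · rcases F_d2 (ed_u d2) with h|h <;> rw [h] <;> tauto
        · rcases F_h0 (ed_u h0) with h|h <;> rw [h] <;> tauto
        · rcases F_h3 (ed_u h3) with h|h <;> rw [h] <;> tauto
        · rcases F_m0 (ed_u m0) with h|h <;> rw [h] <;> tauto
        · rcases F_m3 (ed_u m3) with h|h <;> rw [h] <;> tauto
      · rintro (h|h|h|h|h) <;> revert h <;> decide
    · -- B2 : m3 - h1
      have F_h1 : ∀ {y}, Ed u v h1 y → y = d0 ∨ y = m3 :=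
        Efull (Esymm ed0h1) (Esymm e3) (by decide)
      have nm4 : ¬ Ed u v m4 h1 := Enot (Esymm ed0h1) (Esymm e3) (by decide) (by decide) (by decide)
      have hm4' : ∀ y, Ed u v m4 y → y = h2 ∨ y = m1 := by
        intro y hy
        rcases A_m4 y (Eadj hy) with h|h|h
        exacts [absurd (h ▸ hy) nm4, Or.inl h, Or.inr h]
      obtain ⟨e4, e5⟩ := Etwo hm4' (by decide)
      have F_h2 : ∀ {y}, Ed u v h2 y → y = d1 ∨ y = m4 :=
        Efull (Esymm ed1h2) (Esymm e4) (by decide)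
      rcases Ethird (fun y hy => A_m1 y (Eadj hy)) (Esymm e5) with e6 | e6
      · -- B2a : m1 - h4
        have nm5a : ¬ Ed u v m5 h2 :=
          Enot (Esymm ed1h2) (Esymm e4) (by decide) (by decide) (by decide)
        have nm5b : ¬ Ed u v m5 h3 :=
          Enot (Esymm ed2h3) (Esymm e1) (by decide) (by decide) (by decide)
        exact Eone (x := m5) (c := m2) (fun y hy => by
          rcases A_m5 y (Eadj hy) with h|h|h
          exacts [absurd (h ▸ hy) nm5a, absurd (h ▸ hy) nm5b, h])
      · -- B2b : m1 - h5
        have nm5a : ¬ Ed u v m5 h2 :=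
          Enot (Esymm ed1h2) (Esymm e4) (by decide) (by decide) (by decide)
        have nm5b : ¬ Ed u v m5 h3 :=
          Enot (Esymm ed2h3) (Esymm e1) (by decide) (by decide) (by decide)
        exact Eone (x := m5) (c := m2) (fun y hy => by
          rcases A_m5 y (Eadj hy) with h|h|h
          exacts [absurd (h ▸ hy) nm5a, absurd (h ▸ hy) nm5b, h])
  · -- Branch C : m0 - h4, m0 - m3
    have F_m0 : ∀ {y}, Ed u v m0 y → y = h4 ∨ y = m3 := Efull e1 e2 (by decide)
    have F_h4 : ∀ {y}, Ed u v h4 y → y = d0 ∨ y = m0 :=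
      Efull (Esymm ed0h4) (Esymm e1) (by decide)
    rcases Ethird (fun y hy => A_m3 y (Eadj hy)) (Esymm e2) with e3 | e3
    · -- C1 : m3 - h0
      have nm2 : ¬ Ed u v m2 h0 :=
        Enot (Esymm ed2h0) (Esymm e3) (by decide) (by decide) (by decide)
      have hm2' : ∀ y, Ed u v m2 y → y = h5 ∨ y = m5 := by
        intro y hy
        rcases A_m2 y (Eadj hy) with h|h|h
        exacts [Or.inl h, absurd (h ▸ hy) nm2, Or.inr h]
      obtain ⟨e4, e5⟩ := Etwo hm2' (by decide)
      have nm1a : ¬ Ed u v m1 h4 :=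
        Enot (Esymm ed0h4) (Esymm e1) (by decide) (by decide) (by decide)
      have nm1b : ¬ Ed u v m1 h5 :=
        Enot (Esymm ed1h5) (Esymm e4) (by decide) (by decide) (by decide)
      exact Eone (x := m1) (c := m4) (fun y hy => by
        rcases A_m1 y (Eadj hy) with h|h|h
        exacts [absurd (h ▸ hy) nm1a, absurd (h ▸ hy) nm1b, h])
    · -- C2 : m3 - h1
      have F_m3 : ∀ {y}, Ed u v m3 y → y = m0 ∨ y = h1 := Efull (Esymm e2) e3 (by decide)
      have nm4 : ¬ Ed u v m4 h1 := Enot (Esymm ed0h1) (Esymm e3) (by decide) (by decide) (by decide)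
      have hm4' : ∀ y, Ed u v m4 y → y = h2 ∨ y = m1 := by
        intro y hy
        rcases A_m4 y (Eadj hy) with h|h|h
        exacts [absurd (h ▸ hy) nm4, Or.inl h, Or.inr h]
      obtain ⟨e4, e5⟩ := Etwo hm4' (by decide)
      have nm1 : ¬ Ed u v m1 h4 :=
        Enot (Esymm ed0h4) (Esymm e1) (by decide) (by decide) (by decide)
      have e6 : Ed u v m1 h5 := by
        rcases Ethird (fun y hy => A_m1 y (Eadj hy)) (Esymm e5) with h|h
        exacts [absurd h nm1, h]
      have nm2 : ¬ Ed u v m2 h5 :=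
        Enot (Esymm ed1h5) (Esymm e6) (by decide) (by decide) (by decide)
      have hm2' : ∀ y, Ed u v m2 y → y = h0 ∨ y = m5 := by
        intro y hy
        rcases A_m2 y (Eadj hy) with h|h|h
        exacts [absurd (h ▸ hy) nm2, Or.inl h, Or.inr h]
      obtain ⟨e7, e8⟩ := Etwo hm2' (by decide)
      have F_h0 : ∀ {y}, Ed u v h0 y → y = d2 ∨ y = m2 :=
        Efull (Esymm ed2h0) (Esymm e7) (by decide)
      have F_m2 : ∀ {y}, Ed u v m2 y → y = h0 ∨ y = m5 := Efull e7 e8 (by decide)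
      have nm5 : ¬ Ed u v m5 h2 :=
        Enot (Esymm ed1h2) (Esymm e4) (by decide) (by decide) (by decide)
      have hm5' : ∀ y, Ed u v m5 y → y = h3 ∨ y = m2 := by
        intro y hy
        rcases A_m5 y (Eadj hy) with h|h|h
        exacts [absurd (h ▸ hy) nm5, Or.inl h, Or.inr h]
      obtain ⟨e9, e10⟩ := Etwo hm5' (by decide)
      have F_m5 : ∀ {y}, Ed u v m5 y → y = h3 ∨ y = m2 := Efull e9 e10 (by decide)
      have F_h3 : ∀ {y}, Ed u v h3 y → y = d2 ∨ y = m5 :=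
        Efull (Esymm ed2h3) (Esymm e9) (by decide)
      refine closure horb (fun x => x = d2 ∨ x = h0 ∨ x = h3 ∨ x = m2 ∨ x = m5) ?_ d2 m0
        (Or.inl rfl) ?_
      · intro x hx
        rcases hx with rfl|rfl|rfl|rfl|rfl
        · rcases F_d2 (ed_u d2) with h|h <;> rw [h] <;> tauto
        · rcases F_h0 (ed_u h0) with h|h <;> rw [h] <;> tauto
        · rcases F_h3 (ed_u h3) with h|h <;> rw [h] <;> tauto
        · rcases F_m2 (ed_u m2) with h|h <;> rw [h] <;> tauto
        · rcases F_m5 (ed_u m5) with h|h <;> rw [h] <;> tauto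
      · rintro (h|h|h|h|h) <;> revert h <;> decide

end NoHam



lemma det3_swap (a b c : Pl) : det3 b a c = -det3 a b c := by unfold det3; ring

lemma det3_rot (a b c : Pl) : det3 b c a = det3 a b c := by unfold det3; ring

lemma det3_self (c d : Pl) : det3 c d c = 0 := by unfold det3; ring

lemma det3_self' (c d : Pl) : det3 c d d = 0 := by unfold det3; ring

lemma det3_comb (c d a b : Pl) (s t : ℝ) (h : s + t = 1) :
    det3 c d (s • a + t • b) = s * det3 c d a + t * det3 c d b := by
  have ht : t = 1 - s := by linarith
  subst ht
  simp only [det3, Prod.fst_add, Prod.snd_add, Prod.smul_fst, Prod.smul_snd, smul_eq_mul]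
  ring

lemma det3_zero_seg {x c d : Pl} (h : x ∈ segment ℝ c d) : det3 c d x = 0 := by
  obtain ⟨s, t, _, _, hst, rfl⟩ := h
  rw [det3_comb c d c d s t hst, det3_self, det3_self']
  ring

lemma det3_pos_seg {x a b c d : Pl} (h : x ∈ segment ℝ a b)
    (ha : 0 < det3 c d a) (hb : 0 < det3 c d b) : 0 < det3 c d x := by
  obtain ⟨s, t, hs, ht, hst, rfl⟩ := h
  rw [det3_comb c d a b s t hst]
  rcases eq_or_lt_of_le hs with h'|h'
  · have : t = 1 := by linarith
    simp [← h', this, hb]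
  · nlinarith

lemma disjoint_of_pos_side {a b c d : Pl} (ha : 0 < det3 c d a) (hb : 0 < det3 c d b) :
    Disjoint (segment ℝ a b) (segment ℝ c d) := by
  rw [Set.disjoint_left]
  intro x h1 h2
  exact absurd (det3_zero_seg h2) (ne_of_gt (det3_pos_seg h1 ha hb))

lemma disjoint_of_neg_side {a b c d : Pl} (ha : det3 c d a < 0) (hb : det3 c d b < 0) :
    Disjoint (segment ℝ a b) (segment ℝ c d) := by
  rw [show segment ℝ c d = segment ℝ d c from segment_symm ℝ c d]
  refine disjoint_of_pos_side (c := d) (d := c) ?_ ?_ <;> rw [det3_swap] <;> linarith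

/-- scalar core of the segment crossing lemma -/
lemma cross_core (a1 a2 b1 b2 c1 c2 d1 d2 : ℝ)
    (h1 : 0 < (d1-c1)*(a2-c2)-(d2-c2)*(a1-c1))
    (h2 : (d1-c1)*(b2-c2)-(d2-c2)*(b1-c1) < 0)
    (h3 : (b1-a1)*(c2-a2)-(b2-a2)*(c1-a1) < 0)
    (h4 : 0 < (b1-a1)*(d2-a2)-(b2-a2)*(d1-a1)) :
    ∃ s w : ℝ, 0 ≤ s ∧ s ≤ 1 ∧ 0 ≤ w ∧ w ≤ 1 ∧
      (1-s)*a1 + s*b1 = (1-w)*c1 + w*d1 ∧ (1-s)*a2 + s*b2 = (1-w)*c2 + w*d2 := by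
  have hT : 0 < ((d1-c1)*(a2-c2)-(d2-c2)*(a1-c1)) - ((d1-c1)*(b2-c2)-(d2-c2)*(b1-c1)) := by
    linarith
  set T := ((d1-c1)*(a2-c2)-(d2-c2)*(a1-c1)) - ((d1-c1)*(b2-c2)-(d2-c2)*(b1-c1)) with hTdef
  have hT2 : T = ((b1-a1)*(d2-a2)-(b2-a2)*(d1-a1)) - ((b1-a1)*(c2-a2)-(b2-a2)*(c1-a1)) := by
    rw [hTdef]; ring
  obtain ⟨s, hs0, hs1, hss⟩ :
      ∃ s : ℝ, 0 ≤ s ∧ s ≤ 1 ∧ s * T = (d1-c1)*(a2-c2)-(d2-c2)*(a1-c1) :=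
    ⟨((d1-c1)*(a2-c2)-(d2-c2)*(a1-c1)) / T, div_nonneg h1.le hT.le,
      (div_le_one hT).2 (by linarith), div_mul_cancel₀ _ hT.ne'⟩
  obtain ⟨w, hw0, hw1, hww⟩ :
      ∃ w : ℝ, 0 ≤ w ∧ w ≤ 1 ∧ w * T = -((b1-a1)*(c2-a2)-(b2-a2)*(c1-a1)) :=
    ⟨(-((b1-a1)*(c2-a2)-(b2-a2)*(c1-a1))) / T, div_nonneg (by linarith) hT.le,
      (div_le_one hT).2 (by rw [hT2]; linarith), div_mul_cancel₀ _ hT.ne'⟩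
  refine ⟨s, w, hs0, hs1, hw0, hw1, ?_, ?_⟩
  · apply mul_left_cancel₀ hT.ne'
    have hss' := hss
    have hww' := hww
    rw [hTdef] at hss' hww'
    linear_combination (b1-a1)*hss' - (d1-c1)*hww'
  · apply mul_left_cancel₀ hT.ne'
    have hss' := hss
    have hww' := hww
    rw [hTdef] at hss' hww'
    linear_combination (b2-a2)*hss' - (d2-c2)*hww'

lemma not_disjoint_of_cross {a b c d : Pl} (h1 : 0 < det3 c d a) (h2 : det3 c d b < 0)
    (h3 : det3 a b c < 0) (h4 : 0 < det3 a b d) :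
    ¬ Disjoint (segment ℝ a b) (segment ℝ c d) := by
  unfold det3 at h1 h2 h3 h4
  obtain ⟨s, w, hs0, hs1, hw0, hw1, e1, e2⟩ :=
    cross_core a.1 a.2 b.1 b.2 c.1 c.2 d.1 d.2 h1 h2 h3 h4
  rw [Set.not_disjoint_iff]
  refine ⟨(1-s) • a + s • b, ⟨1-s, s, by linarith, hs0, by ring, rfl⟩,
    ⟨1-w, w, by linarith, hw0, by ring, ?_⟩⟩
  apply Prod.ext <;>
    simp only [Prod.fst_add, Prod.snd_add, Prod.smul_fst, Prod.smul_snd, smul_eq_mul] <;>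
    linarith [e1, e2]

lemma collinear_of_det3 {a b c : Pl} (h : det3 a b c = 0) :
    Collinear ℝ ({a, b, c} : Set Pl) := by
  rcases eq_or_ne a b with rfl|hab
  · have he : ({a, a, c} : Set Pl) = {a, c} := by
      simp [Set.insert_comm]
    rw [he]
    exact collinear_pair ℝ a c
  · rw [collinear_iff_of_mem (Set.mem_insert a _)]
    refine ⟨b - a, ?_⟩
    intro p hp
    simp only [Set.mem_insert_iff, Set.mem_singleton_iff] at hp
    rcases hp with rfl | rfl | rfl
    · exact ⟨0, by simp⟩
    · exact ⟨1, by simp⟩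
    · unfold det3 at h
      rcases eq_or_ne (b.1 - a.1) 0 with h1|h1
      · have h2 : b.2 - a.2 ≠ 0 := by
          intro h2
          exact hab (Prod.ext (by linarith) (by linarith))
        have hc1 : p.1 - a.1 = 0 := by
          rw [h1, zero_mul] at h
          have hz : (b.2 - a.2) * (p.1 - a.1) = 0 := by linarith
          rcases mul_eq_zero.mp hz with h'|h'
          · exact absurd h' h2
          · exact h'
        refine ⟨(p.2 - a.2) / (b.2 - a.2), ?_⟩
        have key : (p.2 - a.2) / (b.2 - a.2) * (b.2 - a.2) = p.2 - a.2 :=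
          div_mul_cancel₀ _ h2
        apply Prod.ext <;>
          simp only [vadd_eq_add, Prod.fst_add, Prod.snd_add, Prod.smul_fst, Prod.smul_snd,
            Prod.fst_sub, Prod.snd_sub, smul_eq_mul]
        · rw [h1, mul_zero]; linarith
        · linarith
      · refine ⟨(p.1 - a.1) / (b.1 - a.1), ?_⟩
        have key : (p.1 - a.1) / (b.1 - a.1) * (b.1 - a.1) = p.1 - a.1 :=
          div_mul_cancel₀ _ h1
        have key2 : (b.1 - a.1) * (p.2 - a.2) = (b.2 - a.2) * (p.1 - a.1) := by linarith [h]
        have key3 : (p.1 - a.1) / (b.1 - a.1) * (b.2 - a.2) = p.2 - a.2 := by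
          rw [div_mul_eq_mul_div, div_eq_iff h1]
          linear_combination -h
        apply Prod.ext <;>
          simp only [vadd_eq_add, Prod.fst_add, Prod.snd_add, Prod.smul_fst, Prod.smul_snd,
            Prod.fst_sub, Prod.snd_sub, smul_eq_mul]
        · linarith
        · linarith

/-- Barycentric: if `b` sees `p0 a c` with these orientations, `b` is in every convex set
containing `p0`, `a`, `c`. -/
lemma mem_convex_of_dets {p0 a b c : Pl} (h1 : 0 < det3 p0 a b) (h2 : 0 < det3 p0 b c)
    (h3 : det3 a b c < 0) {S : Set Pl} (hS : Convex ℝ S) (hp : p0 ∈ S) (ha : a ∈ S)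
    (hc : c ∈ S) : b ∈ S := by
  have hα : 0 < det3 b a c := by rw [det3_swap]; linarith
  have hD : det3 p0 a c = det3 b a c + det3 p0 b c + det3 p0 a b := by unfold det3; ring
  have hDpos : 0 < det3 p0 a c := by rw [hD]; linarith
  have hu : 0 < det3 p0 b c + det3 p0 a b := by linarith
  -- q on segment a c
  have hq : (det3 p0 b c / (det3 p0 b c + det3 p0 a b)) • a +
      (det3 p0 a b / (det3 p0 b c + det3 p0 a b)) • c ∈ S := by
    apply hS ha hc (div_nonneg h2.le hu.le) (div_nonneg h1.le hu.le)
    rw [← add_div, div_self hu.ne']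
  have hb : (det3 b a c / det3 p0 a c) • p0 + ((det3 p0 b c + det3 p0 a b) / det3 p0 a c) •
      ((det3 p0 b c / (det3 p0 b c + det3 p0 a b)) • a +
       (det3 p0 a b / (det3 p0 b c + det3 p0 a b)) • c) = b := by
    apply Prod.ext <;>
      simp only [Prod.fst_add, Prod.snd_add, Prod.smul_fst, Prod.smul_snd, smul_eq_mul] <;>
      field_simp <;>
      unfold det3 <;>
      ring
  have := hS hp hq (div_nonneg hα.le hDpos.le) (div_nonneg hu.le hDpos.le)
    (by rw [← add_div, div_eq_one_iff_eq hDpos.ne']; linarith)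
  rwa [hb] at this



lemma det3_swap_last (a b c : Pl) : det3 a c b = -det3 a b c := by unfold det3; ring

/-- sorting 5 points angularly around `p0`, given trichotomy and transitivity -/
lemma sort5 (Q : Finset Pl) (hQ : Q.card = 5) (p0 : Pl)
    (hne : ∀ a ∈ Q, ∀ b ∈ Q, a ≠ b → det3 p0 a b ≠ 0)
    (htrans : ∀ a ∈ Q, ∀ b ∈ Q, ∀ c ∈ Q,
      0 < det3 p0 a b → 0 < det3 p0 b c → 0 < det3 p0 a c) :
    ∃ f : Fin 5 → Pl, (∀ i, f i ∈ Q) ∧ (∀ x ∈ Q, ∃ i, f i = x) ∧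
      ∀ i j : Fin 5, i < j → 0 < det3 p0 (f i) (f j) := by
  classical
  set rk : Pl → ℕ := fun x => (Q.filter fun y => 0 < det3 p0 y x).card with hrk
  have irr : ∀ a : Pl, ¬ 0 < det3 p0 a a := by
    intro a
    rw [det3_self']
    exact lt_irrefl 0
  have tri : ∀ a ∈ Q, ∀ b ∈ Q, a ≠ b → 0 < det3 p0 a b ∨ 0 < det3 p0 b a := by
    intro a ha b hb hab
    rcases lt_trichotomy (det3 p0 a b) 0 with h|h|h
    · right; rw [det3_swap_last]; linarith
    · exact absurd h (hne a ha b hb hab)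
    · left; exact h
  have mono : ∀ a ∈ Q, ∀ b ∈ Q, 0 < det3 p0 a b → rk a < rk b := by
    intro a ha b hb hab
    apply Finset.card_lt_card
    constructor
    · intro y hy
      rw [Finset.mem_filter] at hy ⊢
      exact ⟨hy.1, htrans y hy.1 a ha b hb hy.2 hab⟩
    · intro hsub
      have : a ∈ Q.filter fun y => 0 < det3 p0 y a :=
        hsub (Finset.mem_filter.2 ⟨ha, hab⟩)
      exact irr a (Finset.mem_filter.1 this).2
  have rklt : ∀ a ∈ Q, ∀ b ∈ Q, rk a < rk b → 0 < det3 p0 a b := by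
    intro a ha b hb hr
    have hab : a ≠ b := fun h => by rw [h] at hr; exact lt_irrefl _ hr
    rcases tri a ha b hb hab with h|h
    · exact h
    · exact absurd (mono b hb a ha h) (by omega)
  have hinj : Set.InjOn rk ↑Q := by
    intro a ha b hb hab
    by_contra hne'
    rcases tri a ha b hb hne' with h|h
    · exact absurd (mono a ha b hb h) (by omega)
    · exact absurd (mono b hb a ha h) (by omega)
  have hbound : ∀ a ∈ Q, rk a < 5 := by
    intro a ha
    have : (Q.filter fun y => 0 < det3 p0 y a) ⊆ Q.erase a := by
      intro y hy
      rw [Finset.mem_filter] at hy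
      refine Finset.mem_erase.2 ⟨?_, hy.1⟩
      intro h
      exact irr a (h ▸ hy.2)
    calc rk a ≤ (Q.erase a).card := Finset.card_le_card this
    _ = 4 := by rw [Finset.card_erase_of_mem ha, hQ]
    _ < 5 := by omega
  have himg : Q.image rk = Finset.range 5 := by
    apply Finset.eq_of_subset_of_card_le
    · intro n hn
      rw [Finset.mem_image] at hn
      obtain ⟨a, ha, rfl⟩ := hn
      exact Finset.mem_range.2 (hbound a ha)
    · rw [Finset.card_range, Finset.card_image_of_injOn hinj, hQ]
  have hex : ∀ i : Fin 5, ∃ x, x ∈ Q ∧ rk x = i.val := by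
    intro i
    have : (i : ℕ) ∈ Q.image rk := by
      rw [himg]; exact Finset.mem_range.2 i.isLt
    rw [Finset.mem_image] at this
    obtain ⟨a, ha, h⟩ := this
    exact ⟨a, ha, h⟩
  choose f hf1 hf2 using hex
  refine ⟨f, fun i => hf1 i, ?_, ?_⟩
  · intro x hx
    refine ⟨⟨rk x, hbound x hx⟩, ?_⟩
    exact hinj (hf1 _) hx (hf2 _)
  · intro i j hij
    apply rklt _ (hf1 i) _ (hf1 j)
    rw [hf2, hf2]
    exact hij

lemma angular_trans (p0 a b c : Pl)
    (ha1 : p0.1 ≤ a.1) (ha2 : a.1 = p0.1 → p0.2 < a.2)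
    (hb1 : p0.1 ≤ b.1) (hb2 : b.1 = p0.1 → p0.2 < b.2)
    (hc1 : p0.1 ≤ c.1)
    (hab : 0 < det3 p0 a b) (hbc : 0 < det3 p0 b c) : 0 < det3 p0 a c := by
  have key : (b.1 - p0.1) * det3 p0 a c
      = (a.1 - p0.1) * det3 p0 b c + (c.1 - p0.1) * det3 p0 a b := by
    unfold det3; ring
  rcases eq_or_lt_of_le hb1 with h | h
  · exfalso
    have hb0 : b.1 - p0.1 = 0 := by linarith
    have e : det3 p0 b c = (b.1 - p0.1) * (c.2 - p0.2) - (b.2 - p0.2) * (c.1 - p0.1) := rfl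
    rw [hb0, zero_mul] at e
    have hb2' := hb2 (by linarith)
    have hnn : 0 ≤ (b.2 - p0.2) * (c.1 - p0.1) := mul_nonneg (by linarith) (by linarith)
    linarith [e]
  · rcases eq_or_lt_of_le ha1 with h2 | h2
    · exfalso
      have ha0 : a.1 - p0.1 = 0 := by linarith
      have e : det3 p0 a b = (a.1 - p0.1) * (b.2 - p0.2) - (a.2 - p0.2) * (b.1 - p0.1) := rfl
      rw [ha0, zero_mul] at e
      have ha2' := ha2 (by linarith)
      have hpos : 0 < (a.2 - p0.2) * (b.1 - p0.1) := mul_pos (by linarith) (by linarith)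
      linarith [e]
    · have t1 : 0 < (a.1 - p0.1) * det3 p0 b c := mul_pos (by linarith) hbc
      have t2 : 0 ≤ (c.1 - p0.1) * det3 p0 a b := mul_nonneg (by linarith) hab.le
      by_contra hX
      push_neg at hX
      have : (b.1 - p0.1) * det3 p0 a c ≤ 0 :=
        mul_nonpos_iff.2 (Or.inl ⟨by linarith, hX⟩)
      linarith

theorem exists_cyclic_order (P : Finset Pl) (h6 : P.card = 6)
    (hdet : ∀ a ∈ P, ∀ b ∈ P, ∀ c ∈ P, a ≠ b → a ≠ c → b ≠ c → det3 a b c ≠ 0)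
    (hconv : ∀ x ∈ P, x ∉ convexHull ℝ (↑P \ {x} : Set Pl)) :
    ∃ p : Fin 6 → Pl, (∀ i, p i ∈ P) ∧ Function.Injective p ∧ (∀ x ∈ P, ∃ i, p i = x) ∧
      ∀ i j k : Fin 6, i < j → j < k → 0 < det3 (p i) (p j) (p k) := by
  classical
  have hP : P.Nonempty := by rw [← Finset.card_pos, h6]; omega
  have hX : (P.image Prod.fst).Nonempty := hP.image _
  set x0 := (P.image Prod.fst).min' hX with hx0
  have hx0mem : x0 ∈ P.image Prod.fst := Finset.min'_mem _ _
  obtain ⟨q0, hq0P, hq0⟩ := Finset.mem_image.1 hx0mem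
  set P1 := P.filter (fun q => q.1 = x0) with hP1def
  have hP1 : P1.Nonempty := ⟨q0, Finset.mem_filter.2 ⟨hq0P, hq0⟩⟩
  have hY : (P1.image Prod.snd).Nonempty := hP1.image _
  set y0 := (P1.image Prod.snd).min' hY with hy0
  have hy0mem : y0 ∈ P1.image Prod.snd := Finset.min'_mem _ _
  obtain ⟨q1, hq1P1, hq1⟩ := Finset.mem_image.1 hy0mem
  have hq1P := (Finset.mem_filter.1 hq1P1).1
  have hq1x : q1.1 = x0 := (Finset.mem_filter.1 hq1P1).2
  set p0 : Pl := (x0, y0) with hp0def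
  have hq1eq : q1 = p0 := Prod.ext hq1x hq1
  have hp0 : p0 ∈ P := hq1eq ▸ hq1P
  have hcoord : ∀ q ∈ P, q ≠ p0 → p0.1 ≤ q.1 ∧ (q.1 = p0.1 → p0.2 < q.2) := by
    intro q hq hqne
    have h1 : x0 ≤ q.1 := Finset.min'_le _ _ (Finset.mem_image_of_mem _ hq)
    refine ⟨h1, ?_⟩
    intro hq1'
    have hqP1 : q ∈ P1 := Finset.mem_filter.2 ⟨hq, hq1'⟩
    have h2 : y0 ≤ q.2 := Finset.min'_le _ _ (Finset.mem_image_of_mem _ hqP1)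
    rcases eq_or_lt_of_le h2 with h3 | h3
    · exact absurd (Prod.ext hq1' h3.symm) hqne
    · exact h3
  set Q := P.erase p0 with hQdef
  have hQcard : Q.card = 5 := by rw [hQdef, Finset.card_erase_of_mem hp0, h6]
  have hQP : ∀ a ∈ Q, a ∈ P ∧ a ≠ p0 := by
    intro a ha
    have := Finset.mem_erase.1 ha
    exact ⟨this.2, this.1⟩
  have hneQ : ∀ a ∈ Q, ∀ b ∈ Q, a ≠ b → det3 p0 a b ≠ 0 := by
    intro a ha b hb hab
    obtain ⟨haP, hane⟩ := hQP a ha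
    obtain ⟨hbP, hbne⟩ := hQP b hb
    exact hdet p0 hp0 a haP b hbP (Ne.symm hane) (Ne.symm hbne) hab
  have htransQ : ∀ a ∈ Q, ∀ b ∈ Q, ∀ c ∈ Q,
      0 < det3 p0 a b → 0 < det3 p0 b c → 0 < det3 p0 a c := by
    intro a ha b hb c hc hab hbc
    obtain ⟨haP, hane⟩ := hQP a ha
    obtain ⟨hbP, hbne⟩ := hQP b hb
    obtain ⟨hcP, hcne⟩ := hQP c hc
    obtain ⟨ha1, ha2⟩ := hcoord a haP hane
    obtain ⟨hb1, hb2⟩ := hcoord b hbP hbne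
    obtain ⟨hc1, _⟩ := hcoord c hcP hcne
    exact angular_trans p0 a b c ha1 ha2 hb1 hb2 hc1 hab hbc
  obtain ⟨f, hf1, hf2, hf3⟩ := sort5 Q hQcard p0 hneQ htransQ
  have finj : Function.Injective f := by
    intro i j hij
    by_contra hne'
    have hlem : ∀ i' j' : Fin 5, i' < j' → f i' = f j' → False := by
      intro i' j' hlt heq
      have := hf3 i' j' hlt
      rw [heq, det3_self'] at this
      exact lt_irrefl 0 this
    rcases lt_or_gt_of_ne hne' with h | h
    · exact hlem i j h hij
    · exact hlem j i h hij.symm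
  have hfQ : ∀ i, f i ∈ P ∧ f i ≠ p0 := fun i => hQP _ (hf1 i)
  set p : Fin 6 → Pl := fun i => if h : i.val = 0 then p0 else f ⟨i.val - 1, by omega⟩
    with hpdef
  have hp_zero : p 0 = p0 := by simp [hpdef]
  have hp_succ : ∀ i : Fin 6, (h : i.val ≠ 0) → p i = f ⟨i.val - 1, by omega⟩ := by
    intro i h
    simp only [hpdef, h, dif_neg, not_false_iff]
  refine ⟨p, ?_, ?_, ?_, ?_⟩
  · intro i
    by_cases h : i.val = 0
    · simp only [hpdef, h, dif_pos]
      exact hp0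
    · simp only [hpdef, h, dif_neg, not_false_iff]
      exact (hfQ _).1
  · intro i j hij
    by_cases hi : i.val = 0 <;> by_cases hj : j.val = 0
    · exact Fin.ext (by omega)
    · rw [hp_succ j hj] at hij
      simp only [hpdef, hi, dif_pos] at hij
      exact absurd hij.symm (hfQ _).2
    · rw [hp_succ i hi] at hij
      simp only [hpdef, hj, dif_pos] at hij
      exact absurd hij (hfQ _).2
    · rw [hp_succ i hi, hp_succ j hj] at hij
      have hvv : i.val - 1 = j.val - 1 := congrArg Fin.val (finj hij)
      exact Fin.ext (by omega)
  · intro x hx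
    by_cases h : x = p0
    · exact ⟨0, by rw [hp_zero, h]⟩
    · obtain ⟨i, hi⟩ := hf2 x (Finset.mem_erase.2 ⟨h, hx⟩)
      refine ⟨⟨i.val + 1, by omega⟩, ?_⟩
      rw [hp_succ ⟨i.val + 1, by omega⟩ (by simp)]
      simpa using hi
  · intro i j k hij hjk
    by_cases hi : i.val = 0
    · have hj : j.val ≠ 0 := by omega
      have hk : k.val ≠ 0 := by omega
      rw [show p i = p0 from by simp only [hpdef, hi, dif_pos], hp_succ j hj, hp_succ k hk]
      apply hf3
      simp only [Fin.mk_lt_mk]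
      omega
    · have hj : j.val ≠ 0 := by omega
      have hk : k.val ≠ 0 := by omega
      rw [hp_succ i hi, hp_succ j hj, hp_succ k hk]
      set a := f ⟨i.val - 1, by omega⟩ with ha
      set b := f ⟨j.val - 1, by omega⟩ with hb
      set c := f ⟨k.val - 1, by omega⟩ with hc
      have hab : 0 < det3 p0 a b := hf3 _ _ (by simp only [Fin.mk_lt_mk]; omega)
      have hbc : 0 < det3 p0 b c := hf3 _ _ (by simp only [Fin.mk_lt_mk]; omega)
      have habne : a ≠ b := fun h => by
        have hvv : i.val - 1 = j.val - 1 := congrArg Fin.val (finj h)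
        omega
      have hbcne : b ≠ c := fun h => by
        have hvv : j.val - 1 = k.val - 1 := congrArg Fin.val (finj h)
        omega
      have hacne : a ≠ c := fun h => by
        have hvv : i.val - 1 = k.val - 1 := congrArg Fin.val (finj h)
        omega
      have hnz : det3 a b c ≠ 0 :=
        hdet a (hfQ _).1 b (hfQ _).1 c (hfQ _).1 habne hacne hbcne
      rcases lt_trichotomy (det3 a b c) 0 with hneg | hzero | hpos
      · exfalso
        have hbP : b ∈ P := (hfQ _).1
        have hmem : b ∈ convexHull ℝ (↑P \ {b} : Set Pl) := by
          apply mem_convex_of_dets hab hbc hneg (convex_convexHull ℝ _)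
          · exact subset_convexHull ℝ _ ⟨hp0,
              fun hh => (hfQ _).2 (Set.mem_singleton_iff.1 hh).symm⟩
          · exact subset_convexHull ℝ _ ⟨(hfQ _).1,
              fun hh => habne (Set.mem_singleton_iff.1 hh)⟩
          · exact subset_convexHull ℝ _ ⟨(hfQ _).1,
              fun hh => hbcne (Set.mem_singleton_iff.1 hh).symm⟩
        exact hconv b hbP hmem
      · exact absurd hzero hnz
      · exact hpos



lemma support_get_eq_getVert {V : Type*} {G : SimpleGraph V} {u v : V} (p : G.Walk u v) :
    ∀ (n : ℕ) (h : n < p.support.length), p.support.get ⟨n, h⟩ = p.getVert n := by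
  induction p with
  | nil =>
    intro n h
    simp only [SimpleGraph.Walk.support_nil, List.length_cons, List.length_nil] at h
    interval_cases n
    · simp [SimpleGraph.Walk.getVert]
  | cons hadj q ih =>
    intro n h
    cases n with
    | zero => simp [SimpleGraph.Walk.support_cons, SimpleGraph.Walk.getVert]
    | succ m =>
      rw [List.get_of_eq (SimpleGraph.Walk.support_cons hadj q) ⟨m + 1, h⟩,
        List.get_cons_succ, SimpleGraph.Walk.getVert_cons_succ]
      apply ih

lemma cycle_to_sigma {V : Type*} [DecidableEq V] [Fintype V] {G : SimpleGraph V}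
    (hcard : Fintype.card V = 15) {a : V} {w : G.Walk a a} (hw : w.IsHamiltonianCycle) :
    ∃ σ : ZMod 15 → V, Function.Bijective σ ∧ ∀ i : ZMod 15, G.Adj (σ i) (σ (i + 1)) := by
  classical
  haveI : Fact (1 < 15) := ⟨by omega⟩
  have hnil : ¬ w.Nil := hw.isCycle.not_nil
  have hwlen : w.length = 15 := by rw [hw.length_eq, hcard]
  have hslen : w.support.length = 16 := by
    rw [SimpleGraph.Walk.length_support, hwlen]
  have hlen : w.support.tail.length = 15 := by
    rw [List.length_tail, hslen]
  have hnodup : w.support.tail.Nodup := hw.isCycle.support_nodup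
  have hmemL : ∀ x : V, x ∈ w.support.tail := by
    intro x
    have := hw.isHamiltonian_tail.mem_support x
    rwa [SimpleGraph.Walk.support_tail_of_not_nil w hnil] at this
  have hgv : ∀ (m : ℕ) (h : m < 15), w.support.tail.get ⟨m, by omega⟩ = w.getVert (m + 1) := by
    intro m h
    rw [List.get_tail _ _ (by omega) (by omega)]
    exact support_get_eq_getVert w (m + 1) (by omega)
  have hgv15 : w.getVert 15 = a := by
    have := SimpleGraph.Walk.getVert_length w
    rwa [hwlen] at this
  have hgv0 : w.getVert 0 = a := SimpleGraph.Walk.getVert_zero w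
  refine ⟨fun i => w.support.tail.get ⟨i.val, by have := i.val_lt; omega⟩, ⟨?_, ?_⟩, ?_⟩
  · intro i j hij
    have h2 := List.nodup_iff_injective_get.1 hnodup hij
    have hv : i.val = j.val := by
      have := congrArg Fin.val h2
      simpa using this
    exact ZMod.val_injective _ hv
  · intro x
    obtain ⟨⟨m, hm⟩, hmx⟩ := List.mem_iff_get.1 (hmemL x)
    refine ⟨(m : ZMod 15), ?_⟩
    rw [← hmx]
    have hv : ((m : ZMod 15)).val = m := by
      rw [ZMod.val_natCast]
      omega
    exact congrArg (List.get w.support.tail) (Fin.ext (by simpa using hv))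
  · intro i
    have hvlt : i.val < 15 := i.val_lt
    have hv1 : (i + 1).val = (i.val + 1) % 15 := by
      rw [ZMod.val_add, ZMod.val_one]
    show G.Adj (w.support.tail.get ⟨i.val, by omega⟩)
      (w.support.tail.get ⟨(i+1).val, by have := (i+1).val_lt; omega⟩)
    rcases Nat.lt_or_ge i.val 14 with h | h
    · have hv2 : (i + 1).val = i.val + 1 := by rw [hv1]; omega
      rw [hgv i.val (by omega), hgv (i+1).val (by omega), hv2]
      exact w.adj_getVert_succ (by omega)
    · have h14 : i.val = 14 := by omega
      have hv2 : (i + 1).val = 0 := by rw [hv1, h14]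
      rw [hgv i.val (by omega), hgv (i+1).val (by omega), hv2, h14]
      have h0 := w.adj_getVert_succ (i := 0) (by omega)
      rw [hgv0] at h0
      rw [show (14 : ℕ) + 1 = 15 from rfl, hgv15]
      exact h0


lemma bridge {p : Fin 6 → Pl}
    (hcyc : ∀ i j k : Fin 6, i < j → j < k → 0 < det3 (p i) (p j) (p k))
    (a b : Pair) :
    Disjoint (segment ℝ (p a.1.1) (p a.1.2)) (segment ℝ (p b.1.1) (p b.1.2)) ↔ hadjRel a b := by
  obtain ⟨⟨i, j⟩, hij⟩ := a
  obtain ⟨⟨k, l⟩, hkl⟩ := b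
  simp only at hij hkl
  dsimp only [hadjRel, pdisj, pcross]
  constructor
  · intro hD
    refine ⟨⟨?_, ?_, ?_, ?_⟩, ?_⟩
    · intro heq
      exact Set.not_disjoint_iff.2 ⟨p i, left_mem_segment ℝ _ _,
        by rw [show i = k from heq]; exact left_mem_segment ℝ _ _⟩ hD
    · intro heq
      exact Set.not_disjoint_iff.2 ⟨p i, left_mem_segment ℝ _ _,
        by rw [show i = l from heq]; exact right_mem_segment ℝ _ _⟩ hD
    · intro heq
      exact Set.not_disjoint_iff.2 ⟨p j, right_mem_segment ℝ _ _,
        by rw [show j = k from heq]; exact left_mem_segment ℝ _ _⟩ hD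
    · intro heq
      exact Set.not_disjoint_iff.2 ⟨p j, right_mem_segment ℝ _ _,
        by rw [show j = l from heq]; exact right_mem_segment ℝ _ _⟩ hD
    · rintro (⟨c1, c2, c3⟩ | ⟨c1, c2, c3⟩)
      · refine absurd hD (not_disjoint_of_cross ?_ ?_ ?_ ?_)
        · rw [det3_rot (p i) (p k) (p l)]
          exact hcyc i k l c1 hkl
        · rw [det3_rot (p j) (p k) (p l), det3_swap (p k) (p j) (p l)]
          linarith [hcyc k j l c2 c3]
        · rw [det3_swap_last (p i) (p k) (p j)]
          linarith [hcyc i k j c1 c2]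
        · exact hcyc i j l hij c3
      · refine absurd hD.symm (not_disjoint_of_cross ?_ ?_ ?_ ?_)
        · rw [det3_rot (p k) (p i) (p j)]
          exact hcyc k i j c1 hij
        · rw [det3_rot (p l) (p i) (p j), det3_swap (p i) (p l) (p j)]
          linarith [hcyc i l j c2 c3]
        · rw [det3_swap_last (p k) (p i) (p l)]
          linarith [hcyc k i l c1 c2]
        · exact hcyc k l j hkl c3
  · rintro ⟨⟨d1, d2, d3, d4⟩, hnc⟩
    by_cases h1 : j < k
    · apply disjoint_of_pos_side
      · rw [det3_rot (p i) (p k) (p l)]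
        exact hcyc i k l (hij.trans h1) hkl
      · rw [det3_rot (p j) (p k) (p l)]
        exact hcyc j k l h1 hkl
    · by_cases h2 : l < i
      · refine Disjoint.symm (disjoint_of_pos_side ?_ ?_)
        · rw [det3_rot (p k) (p i) (p j)]
          exact hcyc k i j (hkl.trans h2) hij
        · rw [det3_rot (p l) (p i) (p j)]
          exact hcyc l i j h2 hij
      · rcases lt_or_gt_of_ne d1 with h3 | h3
        · have hkj : k < j := lt_of_le_of_ne (le_of_not_gt h1) d3.symm
          rcases lt_or_gt_of_ne d4 with hjl | hlj
          · exact absurd (Or.inl ⟨h3, hkj, hjl⟩) hnc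
          · apply disjoint_of_pos_side
            · rw [det3_rot (p i) (p k) (p l)]
              exact hcyc i k l h3 hkl
            · exact hcyc k l j hkl hlj
        · have hil : i < l := lt_of_le_of_ne (le_of_not_gt h2) d2
          rcases lt_or_gt_of_ne d4 with hjl | hlj
          · refine Disjoint.symm (disjoint_of_pos_side ?_ ?_)
            · rw [det3_rot (p k) (p i) (p j)]
              exact hcyc k i j h3 hij
            · exact hcyc i j l hij hjl
          · exact absurd (Or.inr ⟨h3, hil, hlj⟩) hnc

end Stmt10

/-- for 6 points in convex position, `D(P)` is not hamiltonian. -/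
theorem stmt_10 (P : Finset Pl) (h6 : P.card = 6) (hgp : GenPos ↑P)
    (hconv : ConvexPos ↑P) [Fintype ↥(Segs (↑P : Set Pl))] [DecidableEq ↥(Segs (↑P : Set Pl))] :
    ¬ (DisjGraph ↑P).IsHamiltonian := by
  classical
  intro hHam
  have hdet : ∀ a ∈ P, ∀ b ∈ P, ∀ c ∈ P, a ≠ b → a ≠ c → b ≠ c → det3 a b c ≠ 0 := by
    intro a ha b hb c hc h1 h2 h3 h0
    exact hgp a (Finset.mem_coe.2 ha) b (Finset.mem_coe.2 hb) c (Finset.mem_coe.2 hc)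
      h1 h2 h3 (Stmt10.collinear_of_det3 h0)
  have hconv' : ∀ x ∈ P, x ∉ convexHull ℝ ((↑P : Set Pl) \ {x}) := fun x hx =>
    hconv x (Finset.mem_coe.2 hx)
  obtain ⟨p, hmem, hinj, hsurj, hcyc⟩ := Stmt10.exists_cyclic_order P h6 hdet hconv'
  have hin_idx : ∀ (i j k : Fin 6), i < j → p k ∈ segment ℝ (p i) (p j) →
      k = i ∨ k = j := by
    intro i j k hlt hk
    by_contra hcon
    push_neg at hcon
    exact hdet (p i) (hmem i) (p j) (hmem j) (p k) (hmem k)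
      (fun h => absurd (hinj h) hlt.ne)
      (fun h => absurd (hinj h) (Ne.symm hcon.1))
      (fun h => absurd (hinj h) (Ne.symm hcon.2))
      (Stmt10.det3_zero_seg hk)
  have hne_idx : ∀ a : Stmt10.Pair, p a.1.1 ≠ p a.1.2 := fun a => hinj.ne (ne_of_lt a.2)
  set segf : Stmt10.Pair → ↥(Segs (↑P : Set Pl)) := fun a =>
    ⟨segment ℝ (p a.1.1) (p a.1.2),
     ⟨p a.1.1, Finset.mem_coe.2 (hmem _), p a.1.2, Finset.mem_coe.2 (hmem _), hne_idx a, rfl⟩⟩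
    with hsegf
  have hsegval : ∀ a : Stmt10.Pair, (segf a : Set Pl) = segment ℝ (p a.1.1) (p a.1.2) :=
    fun a => rfl
  have hseginj : Function.Injective segf := by
    intro a b hab
    have hval : segment ℝ (p b.1.1) (p b.1.2) = segment ℝ (p a.1.1) (p a.1.2) := by
      rw [← hsegval a, ← hsegval b, hab]
    have h1 : p b.1.1 ∈ segment ℝ (p a.1.1) (p a.1.2) := by
      rw [← hval]; exact left_mem_segment ℝ _ _
    have h2 : p b.1.2 ∈ segment ℝ (p a.1.1) (p a.1.2) := by
      rw [← hval]; exact right_mem_segment ℝ _ _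
    have e1 := hin_idx _ _ _ a.2 h1
    have e2 := hin_idx _ _ _ a.2 h2
    have hb : b.1.1 < b.1.2 := b.2
    have ha : a.1.1 < a.1.2 := a.2
    rcases e1 with e1 | e1 <;> rcases e2 with e2 | e2
    · exfalso; rw [e1, e2] at hb; exact lt_irrefl _ hb
    · exact Subtype.ext (Prod.ext e1.symm e2.symm)
    · exfalso; rw [e1, e2] at hb; exact lt_asymm ha hb
    · exfalso; rw [e1, e2] at hb; exact lt_irrefl _ hb
  have hsegsurj : Function.Surjective segf := by
    rintro ⟨s, a0, ha0, b0, hb0, hne0, rfl⟩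
    obtain ⟨i, hi⟩ := hsurj a0 (Finset.mem_coe.1 ha0)
    obtain ⟨j, hj⟩ := hsurj b0 (Finset.mem_coe.1 hb0)
    have hij : i ≠ j := fun h => hne0 (by rw [← hi, ← hj, h])
    rcases lt_or_gt_of_ne hij with h | h
    · refine ⟨⟨(i, j), h⟩, Subtype.ext ?_⟩
      show segment ℝ (p i) (p j) = segment ℝ a0 b0
      rw [hi, hj]
    · refine ⟨⟨(j, i), h⟩, Subtype.ext ?_⟩
      show segment ℝ (p j) (p i) = segment ℝ a0 b0
      rw [hj, hi, segment_symm]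
  set e : Stmt10.Pair ≃ ↥(Segs (↑P : Set Pl)) :=
    Equiv.ofBijective segf ⟨hseginj, hsegsurj⟩ with he
  have hcard15 : Fintype.card ↥(Segs (↑P : Set Pl)) = 15 := by
    rw [← Fintype.card_congr e]
    decide
  obtain ⟨a, w, hw⟩ := hHam (by rw [hcard15]; omega)
  obtain ⟨σ, hσbij, hσadj⟩ := Stmt10.cycle_to_sigma hcard15 hw
  have hσ'bij : Function.Bijective (fun i : ZMod 15 => e.symm (σ i)) :=
    e.symm.bijective.comp hσbij
  set τ : ZMod 15 ≃ Stmt10.Pair := Equiv.ofBijective _ hσ'bij with hτ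
  have hτ_apply : ∀ i : ZMod 15, τ i = e.symm (σ i) := fun i => rfl
  have hadjP : ∀ i : ZMod 15, Stmt10.hadjRel (τ i) (τ (i + 1)) := by
    intro i
    have h2 : Disjoint ((σ i : Set Pl)) ((σ (i + 1) : Set Pl)) := hσadj i
    have h3 : ∀ j : ZMod 15, (σ j : Set Pl) = segment ℝ (p (τ j).1.1) (p (τ j).1.2) := by
      intro j
      have h4 : segf (τ j) = σ j := by
        rw [hτ_apply]
        exact e.apply_symm_apply (σ j)
      rw [← h4, hsegval]
    rw [h3 i, h3 (i + 1)] at h2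
    exact (Stmt10.bridge hcyc (τ i) (τ (i + 1))).1 h2
  set u : Stmt10.Pair → Stmt10.Pair := fun x => τ (τ.symm x + 1) with hu
  set v : Stmt10.Pair → Stmt10.Pair := fun x => τ (τ.symm x - 1) with hv
  have hvu : ∀ x, v (u x) = x := by
    intro x
    rw [hu, hv]
    simp only [Equiv.symm_apply_apply, add_sub_cancel_right, Equiv.apply_symm_apply]
  have huv : ∀ x, u (v x) = x := by
    intro x
    rw [hu, hv]
    simp only [Equiv.symm_apply_apply, sub_add_cancel, Equiv.apply_symm_apply]
  have hadju : ∀ x, Stmt10.hadjRel x (u x) := by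
    intro x
    have := hadjP (τ.symm x)
    rwa [Equiv.apply_symm_apply] at this
  have hnb : ∀ x, u (u x) ≠ x := by
    intro x hx
    rw [hu] at hx
    simp only [Equiv.symm_apply_apply] at hx
    have h5 : τ.symm x + 1 + 1 = τ.symm x := by
      have := τ.injective (hx.trans (τ.apply_symm_apply x).symm)
      exact this
    have h6 : (2 : ZMod 15) = 0 := by linear_combination h5
    exact absurd h6 (by decide)
  have horb : ∀ x y : Stmt10.Pair, ∃ n : ℕ, u^[n] x = y := by
    intro x y
    have key : ∀ n : ℕ, u^[n] x = τ (τ.symm x + n) := by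
      intro n
      induction n with
      | zero => simp
      | succ m ih =>
        rw [Function.iterate_succ_apply', ih, hu]
        simp only [Equiv.symm_apply_apply]
        congr 1
        push_cast
        ring
    refine ⟨(τ.symm y - τ.symm x).val, ?_⟩
    rw [key]
    have h8 : ((τ.symm y - τ.symm x).val : ZMod 15) = τ.symm y - τ.symm x :=
      ZMod.natCast_rightInverse _
    rw [h8, show τ.symm x + (τ.symm y - τ.symm x) = τ.symm y by ring,
      Equiv.apply_symm_apply]
  exact Stmt10.no_ham_cycle u v hvu huv hadju hnb horb
end
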